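/- For t ∈ (-1,1), the shape operator of M_t ⊂ S²×S² with respect to the unit normal N, given by A(v₁,v₂) = (1/√(2(1-t²)))·{t(v₁,v₂) - (v₂,v₁) + ⟨p,v₂⟩(p,-q)}, has eigenvalues λ₁ = 0, λ₂ = (1/√2)√((1+t)/(1-t)), λ₃ = -(1/√2)√((1-t)/(1+t)), with eigenvectors X = PN - ⟨PN,N⟩N, J₁N, J₂N respectively. In particular λ₂λ₃ = -1/2 and the Gauss–Kronecker curvature λ₁λ₂λ₃ is zero. -/

import Mathlib

open Matrix

/-- Normalizing constant `1/√(2(1-t²))`. -/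
noncomputable def nc (t : ℝ) : ℝ := 1 / Real.sqrt (2 * (1 - t ^ 2))

/-- First component of the unit normal to `M_t`. -/
noncomputable def N1 (t : ℝ) (p q : Fin 3 → ℝ) : Fin 3 → ℝ := nc t • (q - t • p)

/-- Second component of the unit normal to `M_t`. -/
noncomputable def N2 (t : ℝ) (p q : Fin 3 → ℝ) : Fin 3 → ℝ := nc t • (p - t • q)

/-- The shape operator of `M_t`:
`A(v₁,v₂) = (1/√(2(1-t²)))·{t(v₁,v₂) - (v₂,v₁) + ⟨p,v₂⟩(p,-q)}`. -/
noncomputable def shapeOp (t : ℝ) (p q : Fin 3 → ℝ) (v : (Fin 3 → ℝ) × (Fin 3 → ℝ)) :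
    (Fin 3 → ℝ) × (Fin 3 → ℝ) :=
  (nc t • (t • v.1 - v.2 + (p ⬝ᵥ v.2) • p), nc t • (t • v.2 - v.1 - (p ⬝ᵥ v.2) • q))

/-- `λ₂ = (1/√2)√((1+t)/(1-t))`. -/
noncomputable def lam2 (t : ℝ) : ℝ := Real.sqrt ((1 + t) / (1 - t)) / Real.sqrt 2

/-- `λ₃ = -(1/√2)√((1-t)/(1+t))`. -/
noncomputable def lam3 (t : ℝ) : ℝ := -(Real.sqrt ((1 - t) / (1 + t)) / Real.sqrt 2)

/-- For `t ∈ (-1,1)` the shape operator of `M_t` has eigenvalues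
`λ₁ = 0`, `λ₂ = (1/√2)√((1+t)/(1-t))`, `λ₃ = -(1/√2)√((1-t)/(1+t))` with eigenvectors
`X = PN - ⟨PN,N⟩N = PN`, `J₁N = c(p×q, -(p×q))`, `J₂N = c(p×q, p×q)` respectively.
In particular `λ₂λ₃ = -1/2` and the Gauss–Kronecker curvature `λ₁λ₂λ₃` is zero. -/
theorem stmt_5 (t : ℝ) (ht : t ∈ Set.Ioo (-1 : ℝ) 1) (p q : Fin 3 → ℝ)
    (hp : p ⬝ᵥ p = 1) (hq : q ⬝ᵥ q = 1) (hpq : p ⬝ᵥ q = t) :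
    -- A(J₁N) = λ₂ J₁N:
    shapeOp t p q (nc t • crossProduct p q, -(nc t • crossProduct p q)) =
      lam2 t • (nc t • crossProduct p q, -(nc t • crossProduct p q)) ∧
    -- A(J₂N) = λ₃ J₂N:
    shapeOp t p q (nc t • crossProduct p q, nc t • crossProduct p q) =
      lam3 t • (nc t • crossProduct p q, nc t • crossProduct p q) ∧
    -- A X = 0, where X = PN - ⟨PN,N⟩N = PN = (N₁, -N₂):
    shapeOp t p q (N1 t p q, -(N2 t p q)) = 0 ∧
    -- λ₂ λ₃ = -1/2:
    lam2 t * lam3 t = -(1 / 2) ∧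
    -- the Gauss–Kronecker curvature λ₁λ₂λ₃ vanishes (λ₁ = 0):
    0 * lam2 t * lam3 t = 0 := by
  obtain ⟨ht1, ht2⟩ := ht
  have h1 : (0:ℝ) < 1 - t := by linarith
  have h2 : (0:ℝ) < 1 + t := by linarith
  have hs1 : (0:ℝ) < Real.sqrt (1 - t) := Real.sqrt_pos.2 h1
  have hs2 : (0:ℝ) < Real.sqrt (1 + t) := Real.sqrt_pos.2 h2
  have hs3 : (0:ℝ) < Real.sqrt 2 := by positivity
  have hsq : Real.sqrt (2 * (1 - t ^ 2)) =
      Real.sqrt 2 * (Real.sqrt (1 - t) * Real.sqrt (1 + t)) := by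
    rw [show 2 * (1 - t ^ 2) = 2 * ((1 - t) * (1 + t)) by ring,
      Real.sqrt_mul (by norm_num), Real.sqrt_mul h1.le]
  have hA : nc t * (1 + t) = lam2 t := by
    rw [nc, hsq, lam2, Real.sqrt_div h2.le]
    field_simp
    linear_combination (-1 : ℝ) * Real.mul_self_sqrt h2.le
  have hB : nc t * (t - 1) = lam3 t := by
    rw [nc, hsq, lam3, Real.sqrt_div h1.le]
    field_simp
    linear_combination Real.mul_self_sqrt h1.le
  have hprod : Real.sqrt ((1+t)/(1-t)) * Real.sqrt ((1-t)/(1+t)) = 1 := by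
    rw [← Real.sqrt_mul (by positivity), show (1+t)/(1-t) * ((1-t)/(1+t)) = 1 by
      field_simp, Real.sqrt_one]
  have hC : lam2 t * lam3 t = -(1/2) := by
    have h22 : Real.sqrt 2 * Real.sqrt 2 = 2 := Real.mul_self_sqrt (by norm_num)
    rw [lam2, lam3]
    rw [show Real.sqrt ((1+t)/(1-t)) / Real.sqrt 2 * -(Real.sqrt ((1-t)/(1+t)) / Real.sqrt 2)
      = -(Real.sqrt ((1+t)/(1-t)) * Real.sqrt ((1-t)/(1+t)) / (Real.sqrt 2 * Real.sqrt 2)) by ring,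
      hprod, h22]
  have hw : p ⬝ᵥ (crossProduct p q) = 0 := dot_self_cross p q
  refine ⟨?_, ?_, ?_, hC, by rw [zero_mul, zero_mul]⟩
  · have hd : p ⬝ᵥ (-(nc t • crossProduct p q)) = 0 := by
      simp [dotProduct_neg, dotProduct_smul, hw]
    rw [Prod.ext_iff]
    simp only [shapeOp, hd, zero_smul, Prod.smul_mk]
    constructor
    · rw [← hA]; module
    · rw [← hA]; module
  · have hd : p ⬝ᵥ (nc t • crossProduct p q) = 0 := by
      simp [dotProduct_smul, hw]
    rw [Prod.ext_iff]
    simp only [shapeOp, hd, zero_smul, Prod.smul_mk]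
    constructor
    · rw [← hB]; module
    · rw [← hB]; module
  · have hd : p ⬝ᵥ (-(nc t • (p - t • q))) = -(nc t * (1 - t * t)) := by
      simp [dotProduct_neg, dotProduct_smul, dotProduct_sub, hp, hpq]
    rw [Prod.ext_iff]
    simp only [shapeOp, N1, N2, hd]
    constructor
    · show _ = (0 : Fin 3 → ℝ)
      module
    · show _ = (0 : Fin 3 → ℝ)
      module
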